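/- For a symmetric positive definite matrix Θ and a symmetric positive definite matrix Σ̂ with smallest eigenvalue γ > 0, the function value satisfies −log det(Θ) + tr(Σ̂Θ) ≥ −N log(‖Θ‖₂) + γ ‖Θ‖₂, where ‖Θ‖₂ is the largest eigenvalue of Θ. -/

import Mathlib

open Matrix

theorem neg_logdet_plus_trace_lower_bound {N : ℕ} [NeZero N]
    (Θ Sig : Matrix (Fin N) (Fin N) ℝ)
    (hΘ : Θ.IsHermitian) (hΘpd : Θ.PosDef)
    (hSig : Sig.IsHermitian) (hSigpd : Sig.PosDef)
    (γ : ℝ) (hγ : γ = ⨅ i : Fin N, hSig.eigenvalues i) :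
    -(N : ℝ) * Real.log (⨆ i : Fin N, hΘ.eigenvalues i)
        + γ * (⨆ i : Fin N, hΘ.eigenvalues i)
      ≤ -Real.log Θ.det + (Sig * Θ).trace := by
  have hposΘ : ∀ i, 0 < hΘ.eigenvalues i := fun i => hΘpd.eigenvalues_pos i
  have hposS : ∀ i, 0 < hSig.eigenvalues i := fun i => hSigpd.eigenvalues_pos i
  set L := ⨆ i : Fin N, hΘ.eigenvalues i with hLdef
  have hbdd : BddAbove (Set.range hΘ.eigenvalues) :=
    Set.Finite.bddAbove (Set.finite_range _)
  have hle : ∀ i, hΘ.eigenvalues i ≤ L := fun i => le_ciSup hbdd i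
  obtain ⟨j, hj⟩ := Finite.exists_max hΘ.eigenvalues
  have hLj : L = hΘ.eigenvalues j := le_antisymm (ciSup_le hj) (hle j)
  -- γ ≤ each eigenvalue of Sig, and γ ≥ 0
  have hbddb : BddBelow (Set.range hSig.eigenvalues) :=
    Set.Finite.bddBelow (Set.finite_range _)
  have hγle : ∀ i, γ ≤ hSig.eigenvalues i := fun i => hγ ▸ ciInf_le hbddb i
  obtain ⟨k, hk⟩ := Finite.exists_min hSig.eigenvalues
  have hγpos : 0 < γ := by
    have : γ = hSig.eigenvalues k := le_antisymm (hγle k) (hγ ▸ le_ciInf hk)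
    rw [this]; exact hposS k
  -- log det bound
  have hdet : Θ.det = ∏ i, hΘ.eigenvalues i := by
    simpa using hΘ.det_eq_prod_eigenvalues
  have hlogdet : Real.log Θ.det ≤ (N : ℝ) * Real.log L := by
    rw [hdet, Real.log_prod (fun i _ => (hposΘ i).ne')]
    calc ∑ i, Real.log (hΘ.eigenvalues i) ≤ ∑ _i : Fin N, Real.log L :=
          Finset.sum_le_sum fun i _ => Real.log_le_log (hposΘ i) (hle i)
      _ = (N : ℝ) * Real.log L := by simp [mul_comm]
  -- trace of Θ equals sum of its eigenvalues
  have htraceΘ : Θ.trace = ∑ i, hΘ.eigenvalues i := by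
    conv_lhs => rw [hΘ.spectral_theorem, Unitary.conjStarAlgAut_apply]
    rw [Matrix.trace_mul_cycle]
    rw [show (star (hΘ.eigenvectorUnitary : Matrix (Fin N) (Fin N) ℝ)) *
        (hΘ.eigenvectorUnitary : Matrix (Fin N) (Fin N) ℝ) = 1 from
      Matrix.UnitaryGroup.star_mul_self _]
    simp [Matrix.trace_diagonal, RCLike.ofReal_real_eq_id]
  have hLtr : L ≤ Θ.trace := by
    rw [htraceΘ, hLj]
    exact Finset.single_le_sum (fun i _ => (hposΘ i).le) (Finset.mem_univ j)
  -- conjugated matrix M = Uᴴ Θ U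
  set U : Matrix (Fin N) (Fin N) ℝ := (hSig.eigenvectorUnitary : Matrix (Fin N) (Fin N) ℝ)
    with hU
  set M : Matrix (Fin N) (Fin N) ℝ := Uᴴ * Θ * U with hM
  have hMpsd : M.PosSemidef := hΘpd.posSemidef.conjTranspose_mul_mul_same U
  have hMdiag : ∀ i, 0 ≤ M i i := by
    intro i
    exact hMpsd.diag_nonneg
  have hUU : U * star U = 1 := Matrix.mem_unitaryGroup_iff.mp hSig.eigenvectorUnitary.2
  have htrM : M.trace = Θ.trace := by
    rw [hM, Matrix.trace_mul_cycle, ← Matrix.star_eq_conjTranspose, hUU, Matrix.one_mul]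
  -- trace (Sig * Θ) = ∑ d_i * M_ii
  have htrSΘ : (Sig * Θ).trace = ∑ i, hSig.eigenvalues i * M i i := by
    have hSpec : Sig = U * diagonal (RCLike.ofReal ∘ hSig.eigenvalues) * star U :=
      hSig.spectral_theorem
    have h1 := congrArg (fun X => (X * Θ).trace) hSpec
    rw [h1]
    simp only [mul_assoc]
    rw [Matrix.trace_mul_comm]
    have h2 : diagonal (RCLike.ofReal ∘ hSig.eigenvalues) * (star U * Θ) * U
        = diagonal (RCLike.ofReal ∘ hSig.eigenvalues) * M := by
      rw [hM, Matrix.star_eq_conjTranspose]; simp only [mul_assoc]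
    rw [h2]
    simp [Matrix.trace, Matrix.diag, Matrix.diagonal_mul, RCLike.ofReal_real_eq_id]
  have htrge : γ * Θ.trace ≤ (Sig * Θ).trace := by
    rw [htrSΘ, ← htrM]
    have : M.trace = ∑ i, M i i := rfl
    rw [this, Finset.mul_sum]
    exact Finset.sum_le_sum fun i _ =>
      mul_le_mul_of_nonneg_right (hγle i) (hMdiag i)
  have h2 : γ * L ≤ (Sig * Θ).trace :=
    le_trans (mul_le_mul_of_nonneg_left hLtr hγpos.le) htrge
  have h1 : -(N : ℝ) * Real.log L ≤ -Real.log Θ.det := by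
    rw [neg_mul]; linarith
  linarith
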